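/- Let (s_m) be an increasing sequence of positive integers. Let d ≥ 0 be fixed and choose a real number β with 1/(d+1) < β < 1/d if d ≥ 1, and 1 < β < 2 if d = 0. Set N_m := ⌊(s_{m+1})^β⌋ for each m ≥ 1. Then: (i) for every integer ℓ ≥ 1, (1/N_m) Σ_{1 ≤ n ≤ N_m} e^{i ℓ s_{m+1} f_d(n)} → 0 as m → ∞; and (ii) (1/N_m) Σ_{1 ≤ n ≤ N_m} e^{i s_{m+1} f_{d+1}(n)} → 1 as m → ∞. -/

import Mathlib

open Polynomial Filter Topology

noncomputable section

/-- The pair of polynomial sequences `(P_d, Q_d)`: `P_0(n) = n`, `Q_0(n) = 1`,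
`P_{d+1}(n) = P_d(n+1)·Q_d(n)` and `Q_{d+1}(n) = Q_d(n+1)·P_d(n)`. -/
def PQ : ℕ → Polynomial ℝ × Polynomial ℝ
  | 0 => (X, 1)
  | d + 1 => ((PQ d).1.comp (X + C 1) * (PQ d).2, (PQ d).2.comp (X + C 1) * (PQ d).1)

/-- `f_d(x) = log (P_d(x)/Q_d(x))`, well defined for `x` large enough. -/
def fd (d : ℕ) (x : ℝ) : ℝ := Real.log ((PQ d).1.eval x / (PQ d).2.eval x)

open Real

lemma PQ_pos (d : ℕ) : ∀ x : ℝ, 0 < x → 0 < (PQ d).1.eval x ∧ 0 < (PQ d).2.eval x := by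
  induction d with
  | zero => intro x hx; simp [PQ, hx]
  | succ d ih =>
    intro x hx
    have h1 := ih x hx
    have h2 := ih (x + 1) (by linarith)
    simp only [PQ, eval_mul, eval_comp, eval_add, eval_X, eval_C]
    exact ⟨mul_pos h2.1 h1.2, mul_pos h2.2 h1.1⟩

lemma fd_succ (d : ℕ) (x : ℝ) (hx : 0 < x) : fd (d + 1) x = fd d (x + 1) - fd d x := by
  obtain ⟨p1, q1⟩ := PQ_pos d x hx
  obtain ⟨p2, q2⟩ := PQ_pos d (x + 1) (by linarith)
  simp only [fd, PQ, eval_mul, eval_comp, eval_add, eval_X, eval_C]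
  rw [Real.log_div (by positivity) (by positivity), Real.log_div (by positivity) (by positivity),
    Real.log_div (by positivity) (by positivity), Real.log_mul (by positivity) (by positivity),
    Real.log_mul (by positivity) (by positivity)]
  ring

def Gp (c : ℕ) (x : ℝ) : ℝ := ∏ k ∈ Finset.range (c + 1), (x + k)

lemma Gp_pos (c : ℕ) (x : ℝ) (hx : 0 < x) : 0 < Gp c x :=
  Finset.prod_pos fun k _ => by positivity

lemma Gp_succ_left (c : ℕ) (x : ℝ) : Gp (c + 1) x = x * Gp c (x + 1) := by
  rw [Gp, Finset.prod_range_succ', Gp]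
  simp only [Nat.cast_add, Nat.cast_one, Nat.cast_zero, add_zero]
  rw [mul_comm]
  congr 1
  exact Finset.prod_congr rfl fun k _ => by push_cast; ring

lemma Gp_succ_right (c : ℕ) (x : ℝ) : Gp (c + 1) x = Gp c x * (x + (c + 1)) := by
  rw [Gp, Finset.prod_range_succ, Gp]; push_cast; ring_nf

lemma Gp_mono (c : ℕ) {x y : ℝ} (hx : 0 < x) (hxy : x ≤ y) : Gp c x ≤ Gp c y := by
  apply Finset.prod_le_prod (fun k _ => by positivity) (fun k _ => by linarith)

lemma Gp_lower (c : ℕ) {x : ℝ} (hx : 0 < x) : x ^ (c + 1) ≤ Gp c x := by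
  have : x ^ (c + 1) = ∏ _k ∈ Finset.range (c + 1), x := by
    rw [Finset.prod_const, Finset.card_range]
  rw [this, Gp]
  exact Finset.prod_le_prod (fun k _ => le_of_lt hx) (fun k _ => le_add_of_nonneg_right (Nat.cast_nonneg k))

lemma Gp_upper (c : ℕ) {x : ℝ} (hx : 0 < x) : Gp c x ≤ (x + c) ^ (c + 1) := by
  have h : (x + (c:ℝ)) ^ (c + 1) = ∏ _k ∈ Finset.range (c + 1), (x + c) := by
    rw [Finset.prod_const, Finset.card_range]
  rw [h, Gp]
  apply Finset.prod_le_prod (fun k _ => by positivity)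
  intro k hk
  have : (k : ℝ) ≤ c := by exact_mod_cast Nat.lt_succ_iff.mp (Finset.mem_range.mp hk)
  linarith

lemma fd_one (x : ℝ) : fd 1 x = Real.log ((x + 1) / x) := by
  simp [fd, PQ]

lemma fd_hasDeriv (c : ℕ) : ∀ x : ℝ, 0 < x →
    HasDerivAt (fd (c + 1)) ((-1) ^ (c + 1) * ((c + 1).factorial : ℝ) / Gp (c + 1) x) x := by
  induction c with
  | zero =>
    intro x hx
    have h1 : HasDerivAt (fun y : ℝ => Real.log (y + 1)) (1 / (x + 1)) x := by
      have := (Real.hasDerivAt_log (by linarith : x + 1 ≠ 0)).comp x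
        ((hasDerivAt_id x).add_const 1)
      simpa [Function.comp_def] using this
    have h2 : HasDerivAt Real.log (1 / x) x := by
      simpa [one_div] using Real.hasDerivAt_log (ne_of_gt hx)
    have h3 : HasDerivAt (fun y : ℝ => Real.log (y + 1) - Real.log y)
        (1 / (x + 1) - 1 / x) x := h1.sub h2
    have heq : fd 1 =ᶠ[𝓝 x] fun y : ℝ => Real.log (y + 1) - Real.log y := by
      filter_upwards [Ioi_mem_nhds hx] with y hy
      have hy0 : (0:ℝ) < y := hy
      rw [fd_one, Real.log_div (by positivity) (ne_of_gt hy0)]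
    have h4 : HasDerivAt (fd 1) (1 / (x + 1) - 1 / x) x := h3.congr_of_eventuallyEq heq
    convert h4 using 1
    have hG : Gp 1 x = (x + 0) * (x + 1) := by
      simp [Gp, Finset.prod_range_succ]
    rw [hG]
    field_simp
    ring
  | succ c ih =>
    intro x hx
    have hx1 : (0:ℝ) < x + 1 := by linarith
    have h1 : HasDerivAt (fun y : ℝ => fd (c + 1) (y + 1))
        ((-1) ^ (c + 1) * ((c + 1).factorial : ℝ) / Gp (c + 1) (x + 1)) x := by
      have := (ih (x + 1) hx1).comp x ((hasDerivAt_id x).add_const 1)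
      simpa [Function.comp_def] using this
    have h3 := h1.sub (ih x hx)
    have heq : fd (c + 1 + 1) =ᶠ[𝓝 x] fun y : ℝ => fd (c + 1) (y + 1) - fd (c + 1) y := by
      filter_upwards [Ioi_mem_nhds hx] with y hy
      exact fd_succ (c + 1) y hy
    have h4 : HasDerivAt (fd (c + 1 + 1)) ((-1) ^ (c + 1) * ((c + 1).factorial : ℝ) / Gp (c + 1) (x + 1)
        - (-1) ^ (c + 1) * ((c + 1).factorial : ℝ) / Gp (c + 1) x) x := h3.congr_of_eventuallyEq heq
    convert h4 using 1
    have hG2 : (0:ℝ) < Gp (c + 2) x := Gp_pos _ _ hx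
    have hA : Gp (c + 1) (x + 1) = Gp (c + 2) x / x := by
      rw [Gp_succ_left (c + 1) x]; field_simp
    have hxc : (x + ((c:ℝ) + 2)) ≠ 0 := by positivity
    have hB : Gp (c + 1) x = Gp (c + 2) x / (x + ((c:ℝ) + 2)) := by
      have h := Gp_succ_right (c + 1) x
      push_cast at h
      rw [eq_div_iff hxc, h]
      ring
    have hfac : (((c + 1 + 1).factorial) : ℝ) = ((c + 2) : ℝ) * ((c + 1).factorial : ℝ) := by
      rw [Nat.factorial_succ]; push_cast; ring
    rw [show c + 1 + 1 = c + 2 from rfl] at *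
    rw [hfac, hA, hB]
    have hxne : x ≠ 0 := ne_of_gt hx
    have hG2ne : Gp (c + 2) x ≠ 0 := ne_of_gt hG2
    field_simp
    ring

lemma fd_contOn (c : ℕ) {a b : ℝ} (ha : 0 < a) :
    ContinuousOn (fd (c + 1)) (Set.Icc a b) := by
  intro y hy
  have hy0 : 0 < y := lt_of_lt_of_le ha hy.1
  exact ((fd_hasDeriv c y hy0).continuousAt).continuousWithinAt

lemma fd_slope (c : ℕ) {x y : ℝ} (hx : 0 < x) (hxy : x < y) :
    ∃ ξ ∈ Set.Ioo x y, fd (c + 1) y - fd (c + 1) x =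
      (y - x) * ((-1) ^ (c + 1) * ((c + 1).factorial : ℝ) / Gp (c + 1) ξ) := by
  obtain ⟨ξ, hξ, hs⟩ := exists_hasDerivAt_eq_slope (fd (c + 1))
    (fun z => (-1) ^ (c + 1) * ((c + 1).factorial : ℝ) / Gp (c + 1) z) hxy
    (fd_contOn c hx)
    (fun z hz => fd_hasDeriv c z (lt_trans hx hz.1))
  refine ⟨ξ, hξ, ?_⟩
  have hne : y - x ≠ 0 := ne_of_gt (sub_pos.mpr hxy)
  rw [hs]
  field_simp

-- two-sided bounds for H c x := (-1)^c * fd (c+1) x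
lemma fd_diff_bound (c : ℕ) : ∀ x : ℝ, 0 < x →
    ((c.factorial : ℝ) / Gp c (x + 1) ≤ (-1) ^ c * fd (c + 1) x ∧
      (-1) ^ c * fd (c + 1) x ≤ (c.factorial : ℝ) / Gp c x) := by
  induction c with
  | zero =>
    intro x hx
    have h1 : fd 1 x = Real.log ((x + 1) / x) := fd_one x
    have hq : (0:ℝ) < (x + 1) / x := by positivity
    have hg1 : Gp 0 (x + 1) = x + 1 := by simp [Gp]
    have hg0 : Gp 0 x = x := by simp [Gp]
    simp only [pow_zero, one_mul, h1, hg1, hg0, Nat.factorial_zero, Nat.cast_one]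
    constructor
    · have h2 : Real.log (x / (x + 1)) ≤ x / (x + 1) - 1 :=
        Real.log_le_sub_one_of_pos (by positivity)
      have h3 : Real.log (x / (x + 1)) = -Real.log ((x + 1) / x) := by
        rw [← Real.log_inv]; congr 1; field_simp
      rw [h3] at h2
      have h4 : 1 - x / (x + 1) = 1 / (x + 1) := by field_simp; ring
      linarith
    · have h2 : Real.log ((x + 1) / x) ≤ (x + 1) / x - 1 := Real.log_le_sub_one_of_pos hq
      have h4 : (x + 1) / x - 1 = 1 / x := by field_simp; ring
      linarith
  | succ c _ =>
    intro x hx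
    obtain ⟨ξ, hξ, hs⟩ := fd_slope c hx (by linarith : x < x + 1)
    have hξ0 : 0 < ξ := lt_trans hx hξ.1
    have key : fd (c + 1 + 1) x = fd (c + 1) (x + 1) - fd (c + 1) x := fd_succ (c + 1) x hx
    have hval : (-1) ^ (c + 1) * fd (c + 1 + 1) x = ((c + 1).factorial : ℝ) / Gp (c + 1) ξ := by
      rw [key, hs]
      have hG : Gp (c + 1) ξ ≠ 0 := ne_of_gt (Gp_pos _ _ hξ0)
      field_simp
      ring_nf
      rw [mul_comm c 2, pow_mul]
      norm_num
    rw [hval]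
    have hGx : 0 < Gp (c + 1) x := Gp_pos _ _ hx
    have hGξ : 0 < Gp (c + 1) ξ := Gp_pos _ _ hξ0
    have hGx1 : 0 < Gp (c + 1) (x + 1) := Gp_pos _ _ (by linarith)
    constructor
    · exact div_le_div_of_nonneg_left (by positivity) hGξ (Gp_mono _ hξ0 (le_of_lt hξ.2))
    · exact div_le_div_of_nonneg_left (by positivity) hGx (Gp_mono _ hx (le_of_lt hξ.1))

lemma fd_diff_anti (c : ℕ) {x y : ℝ} (hx : 0 < x) (hxy : x < y) :
    (-1) ^ c * fd (c + 1) y ≤ (-1) ^ c * fd (c + 1) x := by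
  obtain ⟨ξ, hξ, hs⟩ := fd_slope c hx hxy
  have hξ0 : 0 < ξ := lt_trans hx hξ.1
  have hG : 0 < Gp (c + 1) ξ := Gp_pos _ _ hξ0
  have h : (-1) ^ c * fd (c + 1) y - (-1) ^ c * fd (c + 1) x
      = -((y - x) * ((c + 1).factorial : ℝ) / Gp (c + 1) ξ) := by
    rw [← mul_sub, hs]
    field_simp
    ring_nf
    rw [mul_comm c 2, pow_mul]
    norm_num
  have hp : 0 < (y - x) * ((c + 1).factorial : ℝ) / Gp (c + 1) ξ := by
    have : (0:ℝ) < y - x := sub_pos.mpr hxy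
    positivity
  linarith

lemma norm_exp_I_mul (t : ℝ) : ‖Complex.exp (Complex.I * t)‖ = 1 := by
  rw [show Complex.I * t = (t:ℂ) * Complex.I by ring]
  exact Complex.norm_exp_ofReal_mul_I t

lemma norm_exp_I_mul_sub_one_le (t : ℝ) : ‖Complex.exp (Complex.I * t) - 1‖ ≤ |t| := by
  rw [show Complex.I * t = (t:ℂ) * Complex.I by ring, Complex.exp_mul_I]
  rw [← Complex.ofReal_cos, ← Complex.ofReal_sin]
  have h : (((Real.cos t : ℝ)) : ℂ) + (Real.sin t : ℝ) * Complex.I - 1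
      = ((Real.cos t - 1 : ℝ) : ℂ) + ((Real.sin t : ℝ)) * Complex.I := by
    push_cast; ring
  rw [h, Complex.norm_add_mul_I]
  have hcos : 1 - t ^ 2 / 2 ≤ Real.cos t := Real.one_sub_sq_div_two_le_cos
  have h2 : (Real.cos t - 1) ^ 2 + Real.sin t ^ 2 = 2 - 2 * Real.cos t := by
    nlinarith [Real.sin_sq_add_cos_sq t]
  rw [h2]
  have h3 : 2 - 2 * Real.cos t ≤ t ^ 2 := by nlinarith
  calc Real.sqrt (2 - 2 * Real.cos t) ≤ Real.sqrt (t ^ 2) := Real.sqrt_le_sqrt h3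
    _ = |t| := Real.sqrt_sq_eq_abs t

def wc (t : ℝ) : ℂ :=
  -(1/2 : ℂ) - ((Real.cos (t/2) / Real.sin (t/2)) / 2 : ℝ) * Complex.I

lemma sin_half_pos {t : ℝ} (h1 : 0 < t) (h2 : t ≤ π) : 0 < Real.sin (t/2) :=
  Real.sin_pos_of_pos_of_lt_pi (by linarith) (by linarith [Real.pi_pos])

lemma sin_half_ge {t : ℝ} (h1 : 0 < t) (h2 : t ≤ π) : t / π ≤ Real.sin (t/2) := by
  have := Real.mul_le_sin (x := t/2) (by linarith) (by linarith)
  have hπ := Real.pi_pos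
  calc t / π = 2 / π * (t / 2) := by field_simp
    _ ≤ Real.sin (t/2) := this

lemma cos_half_nonneg {t : ℝ} (h1 : 0 < t) (h2 : t ≤ π) : 0 ≤ Real.cos (t/2) :=
  Real.cos_nonneg_of_mem_Icc ⟨by linarith [Real.pi_pos], by linarith⟩

lemma wc_mul (t : ℝ) (h1 : 0 < t) (h2 : t ≤ π) :
    (Complex.exp (Complex.I * t) - 1) * wc t = 1 := by
  have hs := sin_half_pos h1 h2
  have hsne : Real.sin (t/2) ≠ 0 := ne_of_gt hs
  have hsc : Real.sin (t/2) ^ 2 + Real.cos (t/2) ^ 2 = 1 := Real.sin_sq_add_cos_sq _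
  set cR := Real.cos (t/2) with hcR
  set sR := Real.sin (t/2) with hsR
  have hscC : (sR:ℂ)^2 + (cR:ℂ)^2 = 1 := by exact_mod_cast hsc
  have hsneC : (sR:ℂ) ≠ 0 := by exact_mod_cast hsne
  have e1 : Complex.exp (Complex.I * t) - 1 = (2*(sR:ℂ)) * (-(sR:ℂ) + (cR:ℂ)*Complex.I) := by
    rw [show Complex.I * t = (t:ℂ)*Complex.I by ring, Complex.exp_mul_I,
      show (t:ℂ) = ((2*(t/2):ℝ):ℂ) by push_cast; ring,
      ← Complex.ofReal_cos, ← Complex.ofReal_sin, Real.cos_two_mul, Real.sin_two_mul,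
      ← hcR, ← hsR]
    push_cast
    linear_combination (2:ℂ) * hscC
  have e2 : wc t * (2*(sR:ℂ)) = -(sR:ℂ) - (cR:ℂ)*Complex.I := by
    rw [wc, ← hcR, ← hsR]
    push_cast
    field_simp
  calc (Complex.exp (Complex.I*t) - 1) * wc t
      = (-(sR:ℂ) + (cR:ℂ)*Complex.I) * (wc t * (2*(sR:ℂ))) := by rw [e1]; ring
    _ = (-(sR:ℂ) + (cR:ℂ)*Complex.I) * (-(sR:ℂ) - (cR:ℂ)*Complex.I) := by rw [e2]
    _ = 1 := by linear_combination hscC - (cR:ℂ)^2 * Complex.I_sq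

lemma wc_norm (t : ℝ) (h1 : 0 < t) (h2 : t ≤ π) : ‖wc t‖ ≤ π / (2 * t) := by
  have hs := sin_half_pos h1 h2
  have hπ := Real.pi_pos
  have h : wc t = ((-(1/2) : ℝ) : ℂ) + ((-(Real.cos (t/2) / Real.sin (t/2) / 2) : ℝ)) * Complex.I := by
    rw [wc]; push_cast; ring
  rw [h, Complex.norm_add_mul_I]
  have key : (-(1/2) : ℝ) ^ 2 + (-(Real.cos (t/2) / Real.sin (t/2) / 2)) ^ 2
      = 1 / (4 * Real.sin (t/2) ^ 2) := by
    have hsc : Real.sin (t/2) ^ 2 + Real.cos (t/2) ^ 2 = 1 := Real.sin_sq_add_cos_sq _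
    field_simp
    nlinarith
  rw [key]
  have hsqrt : Real.sqrt (1 / (4 * Real.sin (t/2) ^ 2)) = 1 / (2 * Real.sin (t/2)) := by
    rw [show 1 / (4 * Real.sin (t/2) ^ 2) = (1 / (2 * Real.sin (t/2))) ^ 2 by field_simp; ring]
    exact Real.sqrt_sq (by positivity)
  rw [hsqrt]
  rw [div_le_div_iff₀ (by positivity) (by positivity)]
  have := sin_half_ge h1 h2
  calc 1 * (2 * t) = 2 * t := by ring
    _ ≤ 2 * (π * Real.sin (t/2)) := by
        have : t ≤ π * Real.sin (t/2) := by
          rw [← div_le_iff₀' hπ] at *; linarith [sin_half_ge h1 h2]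
        linarith
    _ = π * (2 * Real.sin (t/2)) := by ring

lemma cot_half_nonneg {t : ℝ} (h1 : 0 < t) (h2 : t ≤ π) :
    0 ≤ Real.cos (t/2) / Real.sin (t/2) :=
  div_nonneg (cos_half_nonneg h1 h2) (le_of_lt (sin_half_pos h1 h2))

lemma cot_half_le {t : ℝ} (h1 : 0 < t) (h2 : t ≤ π) :
    Real.cos (t/2) / Real.sin (t/2) ≤ π / t := by
  have hs := sin_half_pos h1 h2
  have hπ := Real.pi_pos
  have h3 : Real.cos (t/2) ≤ 1 := Real.cos_le_one _
  have h4 := sin_half_ge h1 h2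
  calc Real.cos (t/2) / Real.sin (t/2) ≤ 1 / (t / π) :=
        div_le_div₀ zero_le_one h3 (by positivity) h4
    _ = π / t := by field_simp

lemma cot_half_anti {a b : ℝ} (ha : 0 < a) (hab : a ≤ b) (hb : b ≤ π) :
    Real.cos (b/2) / Real.sin (b/2) ≤ Real.cos (a/2) / Real.sin (a/2) := by
  have hπ := Real.pi_pos
  have hsa := sin_half_pos ha (le_trans hab hb)
  have hsb := sin_half_pos (lt_of_lt_of_le ha hab) hb
  have hca := cos_half_nonneg ha (le_trans hab hb)
  have hcb : Real.cos (b/2) ≤ Real.cos (a/2) := by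
    apply Real.cos_le_cos_of_nonneg_of_le_pi (by linarith) (by linarith) (by linarith)
  have hsab : Real.sin (a/2) ≤ Real.sin (b/2) := by
    apply Real.sin_le_sin_of_le_of_le_pi_div_two (by linarith) (by linarith) (by linarith)
  exact div_le_div₀ hca hcb hsa hsab

lemma KL (φ θ : ℕ → ℝ) (A B : ℕ) (hAB : A ≤ B)
    (hrec : ∀ n, A ≤ n → n ≤ B → φ (n+1) = φ n + θ n)
    (hpos : ∀ n, A ≤ n → n ≤ B → 0 < θ n)
    (hanti : ∀ n, A ≤ n → n + 1 ≤ B → θ (n+1) ≤ θ n)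
    (hπA : θ A ≤ π) :
    ‖∑ n ∈ Finset.Icc A B, Complex.exp (Complex.I * φ n)‖ ≤ 2 * π / θ B := by
  have hπ := Real.pi_pos
  -- θ n ≤ θ A on the range
  have hmax : ∀ n, A ≤ n → n ≤ B → θ n ≤ θ A := by
    intro n hn
    induction n, hn using Nat.le_induction with
    | base => intro _; exact le_refl _
    | succ n hn ih => intro hnB; exact le_trans (hanti n hn hnB) (ih (by omega))
  have hθmem : ∀ n, A ≤ n → n ≤ B → 0 < θ n ∧ θ n ≤ π :=
    fun n h1 h2 => ⟨hpos n h1 h2, le_trans (hmax n h1 h2) hπA⟩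
  -- the weights
  set w : ℕ → ℂ := fun n => wc (θ n) with hw
  have hwmul : ∀ n, A ≤ n → n ≤ B → (Complex.exp (Complex.I * θ n) - 1) * w n = 1 :=
    fun n h1 h2 => wc_mul (θ n) (hθmem n h1 h2).1 (hθmem n h1 h2).2
  -- Abel-type identity
  have habel : ∀ B', A ≤ B' → B' ≤ B →
      ∑ n ∈ Finset.Icc A B', Complex.exp (Complex.I * φ n)
        = (Complex.exp (Complex.I * φ (B'+1)) - Complex.exp (Complex.I * φ A)) * w B'
          - ∑ n ∈ Finset.Ico A B', (Complex.exp (Complex.I * φ (n+1))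
              - Complex.exp (Complex.I * φ A)) * (w (n+1) - w n) := by
    intro B' hB'
    induction B', hB' using Nat.le_induction with
    | base =>
      intro _
      rw [Finset.Icc_self, Finset.sum_singleton, Finset.Ico_self, Finset.sum_empty]
      have h1 : Complex.exp (Complex.I * φ (A+1)) = Complex.exp (Complex.I * φ A)
          * Complex.exp (Complex.I * θ A) := by
        rw [← Complex.exp_add, hrec A (le_refl A) hAB]
        push_cast
        ring_nf
      rw [h1]
      have h2 := hwmul A (le_refl A) hAB
      calc Complex.exp (Complex.I * φ A)
          = Complex.exp (Complex.I * φ A) * ((Complex.exp (Complex.I * θ A) - 1) * w A) := by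
            rw [h2]; ring
        _ = (Complex.exp (Complex.I * φ A) * Complex.exp (Complex.I * θ A)
              - Complex.exp (Complex.I * φ A)) * w A - 0 := by ring
    | succ B' hB' ih =>
      intro hB'B
      have hB'B' : B' ≤ B := by omega
      rw [Finset.sum_Icc_succ_top (by omega : A ≤ B' + 1), ih hB'B',
        Finset.sum_Ico_succ_top (by omega : A ≤ B')]
      have h1 : Complex.exp (Complex.I * φ (B'+1+1)) = Complex.exp (Complex.I * φ (B'+1))
          * Complex.exp (Complex.I * θ (B'+1)) := by
        rw [← Complex.exp_add, hrec (B'+1) (by omega) hB'B]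
        push_cast
        ring_nf
      have h2 := hwmul (B'+1) (by omega) hB'B
      rw [h1]
      have expand : (Complex.exp (Complex.I * φ (B'+1)) * Complex.exp (Complex.I * θ (B'+1))
            - Complex.exp (Complex.I * φ (B'+1))) * w (B'+1)
          = Complex.exp (Complex.I * φ (B'+1)) := by
        calc (Complex.exp (Complex.I * φ (B'+1)) * Complex.exp (Complex.I * θ (B'+1))
              - Complex.exp (Complex.I * φ (B'+1))) * w (B'+1)
            = Complex.exp (Complex.I * φ (B'+1))
                * ((Complex.exp (Complex.I * θ (B'+1)) - 1) * w (B'+1)) := by ring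
          _ = Complex.exp (Complex.I * φ (B'+1)) := by rw [h2]; ring
      linear_combination -expand
  -- telescoping for the cotangent bound
  set g : ℕ → ℝ := fun n => Real.cos (θ n / 2) / Real.sin (θ n / 2) with hg
  have hgvar : ∀ n, A ≤ n → n + 1 ≤ B → ‖w (n+1) - w n‖ = (g (n+1) - g n) / 2 := by
    intro n h1 h2
    have m1 := hθmem n h1 (by omega)
    have m2 := hθmem (n+1) (by omega) h2
    have hgm : g n ≤ g (n+1) := cot_half_anti m2.1 (hanti n h1 h2) m1.2
    have : w (n+1) - w n = ((g n - g (n+1)) / 2 : ℝ) * Complex.I := by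
      simp only [hw, wc, hg]
      push_cast
      ring
    rw [this]
    rw [norm_mul, Complex.norm_I, mul_one, Complex.norm_real, Real.norm_eq_abs,
      abs_div, abs_of_nonpos (by linarith), abs_of_pos (by norm_num : (0:ℝ) < 2)]
    ring_nf
  -- final bound
  rw [habel B hAB (le_refl B)]
  have hθB := hθmem B hAB (le_refl B)
  have hθA := hθmem A (le_refl A) hAB
  have hwB : ‖w B‖ ≤ π / (2 * θ B) := wc_norm _ hθB.1 hθB.2
  have hdiff : ∀ n m : ℕ, ‖Complex.exp (Complex.I * φ n) - Complex.exp (Complex.I * φ m)‖ ≤ 2 := by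
    intro n m
    calc ‖Complex.exp (Complex.I * φ n) - Complex.exp (Complex.I * φ m)‖
        ≤ ‖Complex.exp (Complex.I * (φ n : ℝ))‖ + ‖Complex.exp (Complex.I * (φ m : ℝ))‖ :=
          norm_sub_le _ _
      _ = 2 := by rw [norm_exp_I_mul, norm_exp_I_mul]; norm_num
  have htel : ∀ B', A ≤ B' → B' ≤ B →
      ∑ n ∈ Finset.Ico A B', (g (n+1) - g n) = g B' - g A := by
    intro B' hB'
    induction B', hB' using Nat.le_induction with
    | base => intro _; rw [Finset.Ico_self, Finset.sum_empty]; ring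
    | succ B' hB' ih =>
      intro h
      rw [Finset.sum_Ico_succ_top hB', ih (by omega)]
      ring
  have hsum : ‖∑ n ∈ Finset.Ico A B, (Complex.exp (Complex.I * φ (n+1))
        - Complex.exp (Complex.I * φ A)) * (w (n+1) - w n)‖ ≤ g B - g A := by
    calc ‖∑ n ∈ Finset.Ico A B, (Complex.exp (Complex.I * φ (n+1))
          - Complex.exp (Complex.I * φ A)) * (w (n+1) - w n)‖
        ≤ ∑ n ∈ Finset.Ico A B, ‖(Complex.exp (Complex.I * φ (n+1))
          - Complex.exp (Complex.I * φ A)) * (w (n+1) - w n)‖ := norm_sum_le _ _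
      _ ≤ ∑ n ∈ Finset.Ico A B, (g (n+1) - g n) := by
          apply Finset.sum_le_sum
          intro n hn
          obtain ⟨h1, h2⟩ := Finset.mem_Ico.mp hn
          rw [norm_mul, hgvar n h1 h2]
          calc ‖Complex.exp (Complex.I * φ (n+1)) - Complex.exp (Complex.I * φ A)‖
                * ((g (n+1) - g n) / 2)
              ≤ 2 * ((g (n+1) - g n) / 2) := by
                apply mul_le_mul_of_nonneg_right (hdiff _ _)
                have m1 := hθmem n h1 (by omega)
                have m2 := hθmem (n+1) (by omega) h2
                have := cot_half_anti m2.1 (hanti n h1 h2) m1.2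
                simp only [hg]
                linarith
            _ = g (n+1) - g n := by ring
      _ = g B - g A := htel B hAB (le_refl B)
  have hgB : g B ≤ π / θ B := cot_half_le hθB.1 hθB.2
  have hgA : 0 ≤ g A := cot_half_nonneg hθA.1 hθA.2
  have hθBpos := hθB.1
  calc ‖(Complex.exp (Complex.I * φ (B+1)) - Complex.exp (Complex.I * φ A)) * w B
        - ∑ n ∈ Finset.Ico A B, (Complex.exp (Complex.I * φ (n+1))
            - Complex.exp (Complex.I * φ A)) * (w (n+1) - w n)‖
      ≤ ‖(Complex.exp (Complex.I * φ (B+1)) - Complex.exp (Complex.I * φ A)) * w B‖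
        + ‖∑ n ∈ Finset.Ico A B, (Complex.exp (Complex.I * φ (n+1))
            - Complex.exp (Complex.I * φ A)) * (w (n+1) - w n)‖ := norm_sub_le _ _
    _ ≤ 2 * (π / (2 * θ B)) + (g B - g A) := by
        apply add_le_add _ hsum
        rw [norm_mul]
        calc ‖Complex.exp (Complex.I * φ (B+1)) - Complex.exp (Complex.I * φ A)‖ * ‖w B‖
            ≤ 2 * ‖w B‖ := mul_le_mul_of_nonneg_right (hdiff _ _) (norm_nonneg _)
          _ ≤ 2 * (π / (2 * θ B)) := by linarith [hwB]
    _ ≤ 2 * (π / (2 * θ B)) + π / θ B := by linarith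
    _ = 2 * π / θ B := by field_simp; ring

lemma fd_abs_le (d : ℕ) {x : ℝ} (hx : 0 < x) :
    |fd (d + 1) x| ≤ (d.factorial : ℝ) / Gp d x := by
  obtain ⟨h1, h2⟩ := fd_diff_bound d x hx
  have hlow : 0 < (d.factorial : ℝ) / Gp d (x + 1) := by
    have := Gp_pos d (x+1) (by linarith)
    have : (0:ℝ) < (d.factorial : ℝ) := by exact_mod_cast d.factorial_pos
    positivity
  have habs : |fd (d + 1) x| = (-1) ^ d * fd (d + 1) x := by
    have h3 : 0 < (-1 : ℝ) ^ d * fd (d + 1) x := lt_of_lt_of_le hlow h1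
    have h4 : |(-1 : ℝ) ^ d * fd (d + 1) x| = |fd (d+1) x| := by
      rw [abs_mul, abs_pow, abs_neg, abs_one, one_pow, one_mul]
    rw [← h4, abs_of_pos h3]
  rw [habs]; exact h2

lemma norm_sum_exp_le_card (S : Finset ℕ) (f : ℕ → ℝ) :
    ‖∑ n ∈ S, Complex.exp (Complex.I * (f n : ℝ))‖ ≤ (S.card : ℝ) := by
  calc ‖∑ n ∈ S, Complex.exp (Complex.I * (f n : ℝ))‖
      ≤ ∑ n ∈ S, ‖Complex.exp (Complex.I * (f n : ℝ))‖ := norm_sum_le _ _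
    _ = ∑ _n ∈ S, (1:ℝ) := by
        exact Finset.sum_congr rfl fun n _ => norm_exp_I_mul (f n)
    _ = (S.card : ℝ) := by simp

lemma norm_sum_exp_sign (d : ℕ) (S : Finset ℕ) (f : ℕ → ℝ) :
    ‖∑ n ∈ S, Complex.exp (Complex.I * (((-1:ℝ)^d * f n : ℝ) : ℂ))‖
      = ‖∑ n ∈ S, Complex.exp (Complex.I * ((f n : ℝ) : ℂ))‖ := by
  rcases Nat.even_or_odd d with he | ho
  · have h1 : ((-1:ℝ))^d = 1 := he.neg_one_pow
    simp [h1]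
  · have h1 : ((-1:ℝ))^d = -1 := ho.neg_one_pow
    simp only [h1]
    have hterm : ∀ n, Complex.exp (Complex.I * (((-1) * f n : ℝ) : ℂ))
        = starRingEnd ℂ (Complex.exp (Complex.I * ((f n : ℝ) : ℂ))) := by
      intro n
      rw [← Complex.exp_conj]
      congr 1
      rw [map_mul, Complex.conj_I, Complex.conj_ofReal]
      push_cast
      ring
    rw [Finset.sum_congr rfl (fun n _ => hterm n), ← map_sum]
    exact RCLike.norm_conj _

lemma sum_split (A B : ℕ) (hA : 1 ≤ A) (hAB : A ≤ B) (f : ℕ → ℂ) :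
    ∑ n ∈ Finset.Icc 1 B, f n
      = (∑ n ∈ Finset.Icc 1 (A-1), f n) + ∑ n ∈ Finset.Icc A B, f n := by
  have e1 : Finset.Icc 1 B = Finset.Ioc 0 B := by rw [← Finset.Icc_add_one_left_eq_Ioc]; rfl
  have e2 : Finset.Icc 1 (A-1) = Finset.Ioc 0 (A-1) := by rw [← Finset.Icc_add_one_left_eq_Ioc]; rfl
  have e3 : Finset.Icc A B = Finset.Ioc (A-1) B := by
    rw [← Finset.Icc_add_one_left_eq_Ioc]
    congr 1
    omega
  rw [e1, e2, e3]
  exact (Finset.sum_Ioc_consecutive f (Nat.zero_le (A-1)) (by omega)).symm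

lemma part1_bound (d : ℕ) (T : ℝ) (hT : 0 < T) (A B : ℕ) (hA : 1 ≤ A) (hAB : A ≤ B)
    (hπA : T * ((d.factorial : ℝ) / Gp d (A : ℝ)) ≤ π) :
    ‖∑ n ∈ Finset.Icc A B, Complex.exp (Complex.I * (((-1:ℝ)^d * (T * fd d n) : ℝ) : ℂ))‖
      ≤ 2 * π * Gp d ((B : ℝ) + 1) / (T * d.factorial) := by
  have hfac : (0:ℝ) < (d.factorial : ℝ) := by exact_mod_cast d.factorial_pos
  have hcast : ∀ n : ℕ, A ≤ n → (0:ℝ) < (n:ℝ) := by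
    intro n hn
    have : 1 ≤ n := le_trans hA hn
    exact_mod_cast this
  have hKL := KL (fun n => (-1:ℝ)^d * (T * fd d n)) (fun n => T * ((-1:ℝ)^d * fd (d+1) n))
    A B hAB
    (by
      intro n h1 _
      have hn0 := hcast n h1
      have hc : ((n+1:ℕ):ℝ) = (n:ℝ)+1 := by push_cast; ring
      simp only [hc, fd_succ d (n:ℝ) hn0]
      ring)
    (by
      intro n h1 _
      have hn0 := hcast n h1
      have hlow := (fd_diff_bound d (n:ℝ) hn0).1
      have : (0:ℝ) < (d.factorial : ℝ) / Gp d ((n:ℝ) + 1) := by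
        have := Gp_pos d ((n:ℝ)+1) (by linarith)
        positivity
      have hpos2 : (0:ℝ) < (-1:ℝ)^d * fd (d+1) (n:ℝ) := lt_of_lt_of_le this hlow
      exact mul_pos hT hpos2)
    (by
      intro n h1 _
      have hn0 := hcast n h1
      have hstep := fd_diff_anti d hn0 (by linarith : (n:ℝ) < (n:ℝ)+1)
      have hc : ((n+1:ℕ):ℝ) = (n:ℝ)+1 := by push_cast; ring
      simp only [hc]
      exact mul_le_mul_of_nonneg_left hstep (le_of_lt hT))
    (by
      have hA0 := hcast A (le_refl A)
      have hup := (fd_diff_bound d (A:ℝ) hA0).2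
      calc T * ((-1:ℝ)^d * fd (d+1) (A:ℝ)) ≤ T * ((d.factorial:ℝ) / Gp d (A:ℝ)) :=
            mul_le_mul_of_nonneg_left hup (le_of_lt hT)
        _ ≤ π := hπA)
  have hB0 := hcast B hAB
  have hGB : 0 < Gp d ((B:ℝ)+1) := Gp_pos d _ (by linarith)
  have hlowB : T * ((d.factorial:ℝ) / Gp d ((B:ℝ)+1)) ≤ T * ((-1:ℝ)^d * fd (d+1) (B:ℝ)) :=
    mul_le_mul_of_nonneg_left (fd_diff_bound d (B:ℝ) hB0).1 (le_of_lt hT)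
  have hlowBpos : 0 < T * ((d.factorial:ℝ) / Gp d ((B:ℝ)+1)) := by positivity
  calc ‖∑ n ∈ Finset.Icc A B, Complex.exp (Complex.I * (((-1:ℝ)^d * (T * fd d n) : ℝ) : ℂ))‖
      ≤ 2 * π / (T * ((-1:ℝ)^d * fd (d+1) (B:ℝ))) := hKL
    _ ≤ 2 * π / (T * ((d.factorial:ℝ) / Gp d ((B:ℝ)+1))) := by
        apply div_le_div_of_nonneg_left (by positivity) hlowBpos hlowB
    _ = 2 * π * Gp d ((B : ℝ) + 1) / (T * d.factorial) := by
        rw [eq_div_iff (by positivity)]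
        field_simp


lemma part2_bound (d : ℕ) (T : ℝ) (hT : 0 ≤ T) (A B : ℕ) (hA : 1 ≤ A) :
    ‖∑ n ∈ Finset.Icc A B, (Complex.exp (Complex.I * ((T * fd (d+1) n : ℝ) : ℂ)) - 1)‖
      ≤ (B : ℝ) * (T * ((d.factorial : ℝ) / Gp d (A : ℝ))) := by
  have hA0 : (0:ℝ) < (A:ℝ) := by exact_mod_cast hA
  have hGA : 0 < Gp d (A:ℝ) := Gp_pos d _ hA0
  have hfac : (0:ℝ) < (d.factorial : ℝ) := by exact_mod_cast d.factorial_pos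
  calc ‖∑ n ∈ Finset.Icc A B, (Complex.exp (Complex.I * ((T * fd (d+1) n : ℝ) : ℂ)) - 1)‖
      ≤ ∑ n ∈ Finset.Icc A B, ‖Complex.exp (Complex.I * ((T * fd (d+1) n : ℝ) : ℂ)) - 1‖ :=
        norm_sum_le _ _
    _ ≤ ∑ _n ∈ Finset.Icc A B, (T * ((d.factorial : ℝ) / Gp d (A : ℝ))) := by
        apply Finset.sum_le_sum
        intro n hn
        obtain ⟨h1, h2⟩ := Finset.mem_Icc.mp hn
        have hn0 : (0:ℝ) < (n:ℝ) := by
          have : 1 ≤ n := le_trans hA h1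
          exact_mod_cast this
        calc ‖Complex.exp (Complex.I * ((T * fd (d+1) n : ℝ) : ℂ)) - 1‖
            ≤ |T * fd (d+1) (n:ℝ)| := norm_exp_I_mul_sub_one_le _
          _ = T * |fd (d+1) (n:ℝ)| := by rw [abs_mul, abs_of_nonneg hT]
          _ ≤ T * ((d.factorial : ℝ) / Gp d (n : ℝ)) :=
              mul_le_mul_of_nonneg_left (fd_abs_le d hn0) hT
          _ ≤ T * ((d.factorial : ℝ) / Gp d (A : ℝ)) := by
              have hmono := Gp_mono d hA0 (show (A:ℝ) ≤ (n:ℝ) by exact_mod_cast h1)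
              have := div_le_div_of_nonneg_left (le_of_lt hfac) hGA hmono
              exact mul_le_mul_of_nonneg_left this hT
    _ = ((Finset.Icc A B).card : ℝ) * (T * ((d.factorial : ℝ) / Gp d (A : ℝ))) := by
        rw [Finset.sum_const, nsmul_eq_mul]
    _ ≤ (B : ℝ) * (T * ((d.factorial : ℝ) / Gp d (A : ℝ))) := by
        have hcard : (((Finset.Icc A B).card) : ℝ) ≤ (B:ℝ) := by
          rw [Nat.card_Icc]
          exact_mod_cast (show B + 1 - A ≤ B by omega)
        exact mul_le_mul_of_nonneg_right hcard (by positivity)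

lemma aux_pow_div (d : ℕ) {u v x : ℝ} (hu : 0 < u) (hv : 2 ≤ v)
    (hx1 : v / 2 ≤ x) (hx2 : x ≤ v) :
    (x + d + 1) ^ (d + 1) / (u * x) ≤ ((d:ℝ) + 2) ^ (d + 1) * (v ^ d / u) := by
  have hx0 : (0:ℝ) < x := by linarith
  have hx1' : (1:ℝ) ≤ x := by linarith
  have hd0 : (0:ℝ) ≤ (d:ℝ) := Nat.cast_nonneg d
  have h1 : x + d + 1 ≤ ((d:ℝ) + 2) * x := by nlinarith
  calc (x + d + 1) ^ (d + 1) / (u * x) ≤ (((d:ℝ) + 2) * x) ^ (d + 1) / (u * x) := by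
        gcongr
    _ = ((d:ℝ) + 2) ^ (d + 1) * (x ^ d / u) := by
        rw [mul_pow, pow_succ]
        field_simp
        ring
    _ ≤ ((d:ℝ) + 2) ^ (d + 1) * (v ^ d / u) := by
        gcongr


/-- Let `(s_m)` be an increasing sequence of positive integers, `d ≥ 0` fixed, and `β` with
`1/(d+1) < β < 1/d` (resp. `1 < β < 2` when `d = 0`). Put `N_m = ⌊s_{m+1}^β⌋`. Then (i) for
every `ℓ ≥ 1`, `(1/N_m) Σ_{1 ≤ n ≤ N_m} e^{i ℓ s_{m+1} f_d(n)} → 0`, and (ii)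
`(1/N_m) Σ_{1 ≤ n ≤ N_m} e^{i s_{m+1} f_{d+1}(n)} → 1` as `m → ∞`. -/
theorem exponential_sum_asymptotics (s : ℕ → ℕ) (hs : StrictMono s) (hspos : ∀ m, 1 ≤ s m)
    (d : ℕ) (β : ℝ)
    (hβ : (d = 0 ∧ 1 < β ∧ β < 2) ∨
          (1 ≤ d ∧ 1 / ((d : ℝ) + 1) < β ∧ β < 1 / (d : ℝ)))
    (N : ℕ → ℕ) (hN : ∀ m, 1 ≤ m → N m = ⌊(s (m + 1) : ℝ) ^ β⌋₊) :
    (∀ ℓ : ℕ, 1 ≤ ℓ → Filter.Tendsto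
        (fun m => (N m : ℂ)⁻¹ * ∑ n ∈ Finset.Icc 1 (N m),
          Complex.exp (Complex.I * (ℓ : ℂ) * (s (m + 1) : ℂ) * (fd d n : ℂ)))
        atTop (𝓝 0)) ∧
      Filter.Tendsto
        (fun m => (N m : ℂ)⁻¹ * ∑ n ∈ Finset.Icc 1 (N m),
          Complex.exp (Complex.I * (s (m + 1) : ℂ) * (fd (d + 1) n : ℂ)))
        atTop (𝓝 1) := by
  have hβkey : 1 / ((d:ℝ) + 1) < β ∧ β * d < 1 := by
    rcases hβ with ⟨hd0, h1, h2⟩ | ⟨hd, h1, h2⟩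
    · subst hd0
      constructor
      · norm_num; linarith
      · norm_num
    · have hd0 : (0:ℝ) < d := by exact_mod_cast hd
      refine ⟨h1, ?_⟩
      rw [lt_div_iff₀ hd0] at h2
      linarith
  obtain ⟨hd1, hβd⟩ := hβkey
  have hdp : (0:ℝ) < (d:ℝ) + 1 := by positivity
  have hβpos : 0 < β := lt_trans (by positivity) hd1
  set γ : ℝ := (1 / ((d:ℝ) + 1) + β) / 2 with hγdef
  have hγ1 : 1 / ((d:ℝ) + 1) < γ := by rw [hγdef]; linarith
  have hγβ : γ < β := by rw [hγdef]; linarith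
  have hγpos : 0 < γ := lt_trans (by positivity) hγ1
  have hγd : 1 < γ * ((d:ℝ) + 1) := by
    rw [div_lt_iff₀ hdp] at hγ1
    linarith
  set σ : ℕ → ℝ := fun m => (s (m+1) : ℝ) with hσdef
  have hσ1 : ∀ m, (1:ℝ) ≤ σ m := fun m => by
    simp only [hσdef]
    exact_mod_cast hspos (m+1)
  have hσpos : ∀ m, (0:ℝ) < σ m := fun m => lt_of_lt_of_le one_pos (hσ1 m)
  have hσtop : Tendsto σ atTop atTop := by
    apply tendsto_atTop_mono (fun m => ?_) tendsto_natCast_atTop_atTop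
    have h : m ≤ s (m+1) := le_trans (Nat.le_succ m) hs.le_apply
    simp only [hσdef]
    exact_mod_cast h
  set A : ℕ → ℕ := fun m => ⌈σ m ^ γ⌉₊ with hAdef
  have hrpow0 : ∀ c : ℝ, c < 0 → Tendsto (fun m => σ m ^ c) atTop (𝓝 0) := by
    intro c hc
    have h := (tendsto_rpow_neg_atTop (show 0 < -c by linarith)).comp hσtop
    simpa [Function.comp_def, neg_neg] using h
  have hσβ : Tendsto (fun m => σ m ^ β) atTop atTop := (tendsto_rpow_atTop hβpos).comp hσtop
  have hσβγ : Tendsto (fun m => σ m ^ (β - γ)) atTop atTop :=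
    (tendsto_rpow_atTop (by linarith)).comp hσtop
  have hE : ∀ᶠ m in atTop, (1 ≤ A m ∧ A m ≤ N m ∧ 1 ≤ N m ∧
      σ m ^ γ ≤ (A m:ℝ) ∧ (A m:ℝ) ≤ 2 * σ m ^ γ ∧ σ m ^ β / 2 ≤ (N m:ℝ) ∧ (N m:ℝ) ≤ σ m ^ β) := by
    filter_upwards [eventually_ge_atTop 1, hσβ.eventually_ge_atTop 2,
      hσβγ.eventually_ge_atTop 4] with m hm hb hbg
    have hNm : N m = ⌊σ m ^ β⌋₊ := hN m hm
    have hγ1' : (1:ℝ) ≤ σ m ^ γ := by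
      calc (1:ℝ) = 1 ^ γ := (Real.one_rpow γ).symm
        _ ≤ σ m ^ γ := Real.rpow_le_rpow (by norm_num) (hσ1 m) (le_of_lt hγpos)
    have hAl : σ m ^ γ ≤ (A m:ℝ) := Nat.le_ceil _
    have hAu : (A m:ℝ) ≤ 2 * σ m ^ γ := by
      have h := Nat.ceil_lt_add_one (show (0:ℝ) ≤ σ m ^ γ by positivity)
      have : (A m : ℝ) < σ m ^ γ + 1 := h
      linarith
    have hNl : σ m ^ β / 2 ≤ (N m:ℝ) := by
      rw [hNm]
      have h2 := Nat.sub_one_lt_floor (σ m ^ β)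
      linarith
    have hNu : (N m:ℝ) ≤ σ m ^ β := by
      rw [hNm]; exact Nat.floor_le (by positivity)
    have hA1 : 1 ≤ A m := Nat.one_le_ceil_iff.mpr (Real.rpow_pos_of_pos (hσpos m) γ)
    have hN1 : 1 ≤ N m := by
      rw [hNm]
      exact Nat.le_floor (by exact_mod_cast (le_trans (by norm_num : (1:ℝ) ≤ 2) hb))
    have hAN : A m ≤ N m := by
      have hchain : (A m : ℝ) ≤ (N m : ℝ) := by
        have hsplit : σ m ^ β = σ m ^ γ * σ m ^ (β - γ) := by
          rw [← Real.rpow_add (hσpos m)]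
          ring_nf
        calc (A m:ℝ) ≤ 2 * σ m ^ γ := hAu
          _ ≤ σ m ^ β / 2 := by rw [hsplit]; nlinarith
          _ ≤ (N m:ℝ) := hNl
      exact_mod_cast hchain
    exact ⟨hA1, hAN, hN1, hAl, hAu, hNl, hNu⟩
  have limAN : Tendsto (fun m => (A m:ℝ)/(N m:ℝ)) atTop (𝓝 0) := by
    have hup : ∀ᶠ m in atTop, (A m:ℝ)/(N m:ℝ) ≤ 4 * σ m ^ (γ - β) := by
      filter_upwards [hE] with m hm
      obtain ⟨_, _, _, _, hAu, hNl, hNu⟩ := hm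
      have h1 : (A m:ℝ)/(N m:ℝ) ≤ (2 * σ m ^ γ)/(σ m ^ β / 2) :=
        div_le_div₀ (mul_nonneg (by norm_num) (le_of_lt (Real.rpow_pos_of_pos (hσpos m) γ)))
          hAu (div_pos (Real.rpow_pos_of_pos (hσpos m) β) two_pos) hNl
      calc (A m:ℝ)/(N m:ℝ) ≤ (2 * σ m ^ γ)/(σ m ^ β / 2) := h1
        _ = 4 * σ m ^ (γ - β) := by
            rw [Real.rpow_sub (hσpos m)]
            have : σ m ^ β ≠ 0 := ne_of_gt (Real.rpow_pos_of_pos (hσpos m) β)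
            field_simp
            ring
    have hlow : ∀ᶠ m in atTop, (0:ℝ) ≤ (A m:ℝ)/(N m:ℝ) :=
      Filter.Eventually.of_forall (fun m => by positivity)
    have hlim4 : Tendsto (fun m => 4 * σ m ^ (γ - β)) atTop (𝓝 0) := by
      have h := (hrpow0 (γ - β) (by linarith)).const_mul 4
      simpa using h
    exact tendsto_of_tendsto_of_tendsto_of_le_of_le' tendsto_const_nhds hlim4 hlow hup
  have hexp1 : 1 - γ * ((d:ℝ)+1) < 0 := by linarith
  have hu0 : Tendsto (fun m => σ m ^ (1 - γ * ((d:ℝ)+1))) atTop (𝓝 0) := hrpow0 _ hexp1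
  have hfacpos : (0:ℝ) < (d.factorial:ℝ) := by exact_mod_cast d.factorial_pos
  have hGpA : ∀ m, 1 ≤ A m → σ m ^ γ ≤ (A m:ℝ) → σ m ^ (γ * ((d:ℝ)+1)) ≤ Gp d (A m : ℝ) := by
    intro m h1 h2
    have hA0 : (0:ℝ) < (A m:ℝ) := by exact_mod_cast h1
    have hstep : σ m ^ (γ * ((d:ℝ)+1)) = (σ m ^ γ) ^ (d+1) := by
      rw [← Real.rpow_natCast (σ m ^ γ) (d+1), ← Real.rpow_mul (le_of_lt (hσpos m))]
      congr 1
      push_cast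
      ring
    calc σ m ^ (γ * ((d:ℝ)+1)) = (σ m ^ γ) ^ (d+1) := hstep
      _ ≤ ((A m:ℝ)) ^ (d+1) := pow_le_pow_left₀ (by positivity) h2 _
      _ ≤ Gp d (A m:ℝ) := Gp_lower d hA0
  have hσdiv : ∀ m, σ m / σ m ^ (γ*((d:ℝ)+1)) = σ m ^ (1 - γ*((d:ℝ)+1)) := fun m => by
    rw [Real.rpow_sub (hσpos m), Real.rpow_one]
  -- the key step-down bound used in both parts:
  have hσGp : ∀ m, 1 ≤ A m → σ m ^ γ ≤ (A m:ℝ) →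
      σ m * ((d.factorial:ℝ) / Gp d (A m : ℝ)) ≤ (d.factorial:ℝ) * σ m ^ (1 - γ*((d:ℝ)+1)) := by
    intro m h1 h2
    have hGp := hGpA m h1 h2
    have hσg : (0:ℝ) < σ m ^ (γ*((d:ℝ)+1)) := Real.rpow_pos_of_pos (hσpos m) _
    have hGpos : 0 < Gp d (A m : ℝ) := Gp_pos d _ (by exact_mod_cast h1)
    have hd2 := div_le_div_of_nonneg_left (show (0:ℝ) ≤ (d.factorial:ℝ) by positivity) hσg hGp
    calc σ m * ((d.factorial:ℝ)/Gp d (A m:ℝ))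
        ≤ σ m * ((d.factorial:ℝ)/σ m ^ (γ*((d:ℝ)+1))) := by
          exact mul_le_mul_of_nonneg_left hd2 (le_of_lt (hσpos m))
      _ = (d.factorial:ℝ) * (σ m / σ m ^ (γ*((d:ℝ)+1))) := by ring
      _ = (d.factorial:ℝ) * σ m ^ (1 - γ*((d:ℝ)+1)) := by rw [hσdiv m]
  constructor
  · -- part (i)
    intro ℓ hℓ
    have hℓ1 : (1:ℝ) ≤ (ℓ:ℝ) := by exact_mod_cast hℓ
    have hπev : ∀ᶠ m in atTop, (ℓ:ℝ) * σ m * ((d.factorial:ℝ) / Gp d (A m : ℝ)) ≤ π := by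
      have hlim : Tendsto (fun m => (ℓ:ℝ) * ((d.factorial:ℝ) * σ m ^ (1 - γ*((d:ℝ)+1))))
          atTop (𝓝 0) := by
        have h := (hu0.const_mul ((d.factorial:ℝ))).const_mul (ℓ:ℝ)
        simpa [mul_assoc] using h
      have hev2 := hlim.eventually_lt_const Real.pi_pos
      filter_upwards [hE, hev2] with m hm h2
      obtain ⟨hA1, _, _, hAl, _, _, _⟩ := hm
      have hstep := hσGp m hA1 hAl
      have : (ℓ:ℝ) * σ m * ((d.factorial:ℝ) / Gp d (A m : ℝ))
          ≤ (ℓ:ℝ) * ((d.factorial:ℝ) * σ m ^ (1 - γ*((d:ℝ)+1))) := by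
        have hGpos : 0 < Gp d (A m : ℝ) := Gp_pos d _ (by exact_mod_cast hA1)
        calc (ℓ:ℝ) * σ m * ((d.factorial:ℝ) / Gp d (A m : ℝ))
            = (ℓ:ℝ) * (σ m * ((d.factorial:ℝ) / Gp d (A m : ℝ))) := by ring
          _ ≤ (ℓ:ℝ) * ((d.factorial:ℝ) * σ m ^ (1 - γ*((d:ℝ)+1))) := by
              exact mul_le_mul_of_nonneg_left hstep (by positivity)
      linarith
    set g1 : ℕ → ℝ := fun m => (A m:ℝ)/(N m:ℝ)
      + (2*π*((d:ℝ)+2)^(d+1)/(d.factorial:ℝ)) * σ m ^ (β*(d:ℝ) - 1) with hg1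
    have hg1lim : Tendsto g1 atTop (𝓝 0) := by
      have h2 := (hrpow0 (β*(d:ℝ)-1) (by linarith)).const_mul
        (2*π*((d:ℝ)+2)^(d+1)/(d.factorial:ℝ))
      have := limAN.add h2
      simpa [hg1] using this
    apply squeeze_zero_norm' _ hg1lim
    filter_upwards [hE, hπev, hσβ.eventually_ge_atTop 2] with m hm hπm hb2
    obtain ⟨hA1, hAN, hN1, hAl, hAu, hNl, hNu⟩ := hm
    have hNpos : (0:ℝ) < (N m:ℝ) := by exact_mod_cast hN1
    have hσm := hσpos m
    have hT : (0:ℝ) < (ℓ:ℝ) * σ m := by positivity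
    have hterm : ∀ n : ℕ, Complex.exp (Complex.I * (ℓ:ℂ) * ((s (m+1)):ℂ) * ((fd d n : ℝ):ℂ))
        = Complex.exp (Complex.I * ((((ℓ:ℝ) * σ m * fd d n) : ℝ) : ℂ)) := by
      intro n
      congr 1
      simp only [hσdef]
      push_cast
      ring
    have hsum := sum_split (A m) (N m) hA1 hAN
      (fun n => Complex.exp (Complex.I * ((((ℓ:ℝ) * σ m * fd d n) : ℝ) : ℂ)))
    have hb1 : ‖∑ n ∈ Finset.Icc 1 (A m - 1),
        Complex.exp (Complex.I * ((((ℓ:ℝ) * σ m * fd d n) : ℝ) : ℂ))‖ ≤ ((A m:ℝ)) := by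
      have h := norm_sum_exp_le_card (Finset.Icc 1 (A m - 1)) (fun n => (ℓ:ℝ) * σ m * fd d n)
      have hcard : ((Finset.Icc 1 (A m - 1)).card : ℝ) ≤ (A m:ℝ) := by
        rw [Nat.card_Icc]
        exact_mod_cast (show A m - 1 + 1 - 1 ≤ A m by omega)
      exact le_trans h hcard
    have hb2' : ‖∑ n ∈ Finset.Icc (A m) (N m),
        Complex.exp (Complex.I * ((((ℓ:ℝ) * σ m * fd d n) : ℝ) : ℂ))‖
        ≤ 2 * π * Gp d ((N m : ℝ) + 1) / (((ℓ:ℝ) * σ m) * d.factorial) := by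
      rw [← norm_sum_exp_sign d (Finset.Icc (A m) (N m)) (fun n => ((ℓ:ℝ) * σ m) * fd d n)]
      exact part1_bound d ((ℓ:ℝ) * σ m) hT (A m) (N m) hA1 hAN hπm
    have hGpN : Gp d ((N m:ℝ)+1) ≤ ((N m:ℝ) + (d:ℝ) + 1)^(d+1) := by
      calc Gp d ((N m:ℝ)+1) ≤ (((N m:ℝ)+1) + d)^(d+1) :=
            Gp_upper d (show (0:ℝ) < (N m:ℝ)+1 by linarith)
        _ = ((N m:ℝ) + (d:ℝ) + 1)^(d+1) := by ring_nf
    have hpowd : (σ m ^ β)^d / σ m = σ m ^ (β*(d:ℝ)-1) := by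
      rw [← Real.rpow_natCast (σ m ^ β) d, ← Real.rpow_mul (le_of_lt hσm),
        Real.rpow_sub (hσpos m), Real.rpow_one]
    have haux := aux_pow_div d hσm hb2 hNl hNu
    have hY : ((N m:ℝ))⁻¹ * (2 * π * Gp d ((N m:ℝ)+1) / (((ℓ:ℝ) * σ m) * d.factorial))
        ≤ (2*π*((d:ℝ)+2)^(d+1)/(d.factorial:ℝ)) * σ m ^ (β*(d:ℝ) - 1) := by
      have h1 : ((N m:ℝ))⁻¹ * (2 * π * Gp d ((N m:ℝ)+1) / (((ℓ:ℝ) * σ m) * d.factorial))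
          ≤ ((N m:ℝ))⁻¹ * (2 * π * (((N m:ℝ) + (d:ℝ) + 1)^(d+1)) / ((1 * σ m) * d.factorial)) := by
        gcongr
      have h2 : ((N m:ℝ))⁻¹ * (2 * π * (((N m:ℝ) + (d:ℝ) + 1)^(d+1)) / ((1 * σ m) * d.factorial))
          = (2*π/(d.factorial:ℝ)) * (((N m:ℝ) + (d:ℝ) + 1)^(d+1) / (σ m * (N m:ℝ))) := by
        field_simp
      calc ((N m:ℝ))⁻¹ * (2 * π * Gp d ((N m:ℝ)+1) / (((ℓ:ℝ) * σ m) * d.factorial))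
          ≤ ((N m:ℝ))⁻¹ * (2 * π * (((N m:ℝ) + (d:ℝ) + 1)^(d+1)) / ((1 * σ m) * d.factorial)) := h1
        _ = (2*π/(d.factorial:ℝ)) * (((N m:ℝ) + (d:ℝ) + 1)^(d+1) / (σ m * (N m:ℝ))) := h2
        _ ≤ (2*π/(d.factorial:ℝ)) * (((d:ℝ)+2)^(d+1) * ((σ m ^ β)^d / σ m)) := by
            exact mul_le_mul_of_nonneg_left haux (by positivity)
        _ = (2*π*((d:ℝ)+2)^(d+1)/(d.factorial:ℝ)) * σ m ^ (β*(d:ℝ) - 1) := by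
            rw [hpowd]
            ring
    calc ‖(N m : ℂ)⁻¹ * ∑ n ∈ Finset.Icc 1 (N m),
          Complex.exp (Complex.I * (ℓ:ℂ) * ((s (m+1)):ℂ) * ((fd d n : ℝ):ℂ))‖
        = ((N m:ℝ))⁻¹ * ‖∑ n ∈ Finset.Icc 1 (N m),
            Complex.exp (Complex.I * ((((ℓ:ℝ) * σ m * fd d n) : ℝ) : ℂ))‖ := by
          rw [Finset.sum_congr rfl (fun n _ => hterm n), norm_mul, norm_inv,
            Complex.norm_natCast]
      _ ≤ ((N m:ℝ))⁻¹ * ((A m:ℝ) + 2 * π * Gp d ((N m:ℝ)+1) / (((ℓ:ℝ) * σ m) * d.factorial)) := by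
          apply mul_le_mul_of_nonneg_left _ (by positivity)
          rw [hsum]
          calc ‖_ + _‖ ≤ ‖_‖ + ‖_‖ := norm_add_le _ _
            _ ≤ (A m:ℝ) + 2 * π * Gp d ((N m:ℝ)+1) / (((ℓ:ℝ) * σ m) * d.factorial) :=
                add_le_add hb1 hb2'
      _ = (A m:ℝ)/(N m:ℝ)
          + ((N m:ℝ))⁻¹ * (2 * π * Gp d ((N m:ℝ)+1) / (((ℓ:ℝ) * σ m) * d.factorial)) := by
          ring
      _ ≤ (A m:ℝ)/(N m:ℝ) + (2*π*((d:ℝ)+2)^(d+1)/(d.factorial:ℝ)) * σ m ^ (β*(d:ℝ) - 1) := by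
          linarith
      _ = g1 m := rfl
  · -- part (ii)
    rw [← tendsto_sub_nhds_zero_iff]
    set g2 : ℕ → ℝ := fun m => 2*((A m:ℝ)/(N m:ℝ))
      + (d.factorial:ℝ) * σ m ^ (1 - γ*((d:ℝ)+1)) with hg2
    have hg2lim : Tendsto g2 atTop (𝓝 0) := by
      have h1 := limAN.const_mul (2:ℝ)
      have h2 := hu0.const_mul (d.factorial:ℝ)
      have := h1.add h2
      simpa [hg2] using this
    apply squeeze_zero_norm' _ hg2lim
    filter_upwards [hE] with m hm
    obtain ⟨hA1, hAN, hN1, hAl, hAu, hNl, hNu⟩ := hm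
    have hNpos : (0:ℝ) < (N m:ℝ) := by exact_mod_cast hN1
    have hσm := hσpos m
    have hNz : ((N m : ℕ):ℂ) ≠ 0 := by
      exact_mod_cast Nat.cast_ne_zero.mpr (by omega)
    have hterm2 : ∀ n : ℕ, Complex.exp (Complex.I * ((s (m+1)):ℂ) * ((fd (d+1) n : ℝ):ℂ))
        = Complex.exp (Complex.I * (((σ m * fd (d+1) n) : ℝ) : ℂ)) := by
      intro n
      congr 1
      simp only [hσdef]
      push_cast
      ring
    have hrw : (N m : ℂ)⁻¹ * (∑ n ∈ Finset.Icc 1 (N m),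
          Complex.exp (Complex.I * ((s (m+1)):ℂ) * ((fd (d+1) n : ℝ):ℂ))) - 1
        = (N m : ℂ)⁻¹ * ∑ n ∈ Finset.Icc 1 (N m),
            (Complex.exp (Complex.I * (((σ m * fd (d+1) n) : ℝ) : ℂ)) - 1) := by
      rw [Finset.sum_sub_distrib, Finset.sum_const, Nat.card_Icc]
      simp only [Nat.add_sub_cancel, nsmul_eq_mul, mul_one]
      rw [Finset.sum_congr rfl (fun n _ => hterm2 n)]
      field_simp
    rw [hrw]
    have hsum := sum_split (A m) (N m) hA1 hAN
      (fun n => Complex.exp (Complex.I * (((σ m * fd (d+1) n) : ℝ) : ℂ)) - 1)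
    have hball : ∀ n : ℕ, ‖Complex.exp (Complex.I * (((σ m * fd (d+1) n) : ℝ) : ℂ)) - 1‖ ≤ 2 := by
      intro n
      calc ‖Complex.exp (Complex.I * (((σ m * fd (d+1) n) : ℝ) : ℂ)) - 1‖
          ≤ ‖Complex.exp (Complex.I * (((σ m * fd (d+1) n) : ℝ) : ℂ))‖ + ‖(1:ℂ)‖ :=
            norm_sub_le _ _
        _ = 2 := by rw [norm_exp_I_mul, norm_one]; norm_num
    have hb1 : ‖∑ n ∈ Finset.Icc 1 (A m - 1),
        (Complex.exp (Complex.I * (((σ m * fd (d+1) n) : ℝ) : ℂ)) - 1)‖ ≤ 2 * (A m:ℝ) := by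
      calc ‖∑ n ∈ Finset.Icc 1 (A m - 1),
          (Complex.exp (Complex.I * (((σ m * fd (d+1) n) : ℝ) : ℂ)) - 1)‖
          ≤ ∑ n ∈ Finset.Icc 1 (A m - 1),
            ‖Complex.exp (Complex.I * (((σ m * fd (d+1) n) : ℝ) : ℂ)) - 1‖ := norm_sum_le _ _
        _ ≤ ∑ _n ∈ Finset.Icc 1 (A m - 1), (2:ℝ) := Finset.sum_le_sum (fun n _ => hball n)
        _ = ((Finset.Icc 1 (A m - 1)).card : ℝ) * 2 := by rw [Finset.sum_const, nsmul_eq_mul]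
        _ ≤ (A m : ℝ) * 2 := by
            have : ((Finset.Icc 1 (A m - 1)).card : ℝ) ≤ (A m:ℝ) := by
              rw [Nat.card_Icc]
              exact_mod_cast (show A m - 1 + 1 - 1 ≤ A m by omega)
            exact mul_le_mul_of_nonneg_right this (by norm_num)
        _ = 2 * (A m:ℝ) := by ring
    have hb2' : ‖∑ n ∈ Finset.Icc (A m) (N m),
        (Complex.exp (Complex.I * (((σ m * fd (d+1) n) : ℝ) : ℂ)) - 1)‖
        ≤ (N m : ℝ) * ((d.factorial:ℝ) * σ m ^ (1 - γ*((d:ℝ)+1))) := by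
      have h := part2_bound d (σ m) (le_of_lt hσm) (A m) (N m) hA1
      have hstep := hσGp m hA1 hAl
      calc ‖∑ n ∈ Finset.Icc (A m) (N m),
          (Complex.exp (Complex.I * (((σ m * fd (d+1) n) : ℝ) : ℂ)) - 1)‖
          ≤ (N m : ℝ) * (σ m * ((d.factorial : ℝ) / Gp d (A m : ℝ))) := h
        _ ≤ (N m : ℝ) * ((d.factorial:ℝ) * σ m ^ (1 - γ*((d:ℝ)+1))) := by
            exact mul_le_mul_of_nonneg_left hstep (by positivity)
    calc ‖(N m : ℂ)⁻¹ * ∑ n ∈ Finset.Icc 1 (N m),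
          (Complex.exp (Complex.I * (((σ m * fd (d+1) n) : ℝ) : ℂ)) - 1)‖
        = ((N m:ℝ))⁻¹ * ‖∑ n ∈ Finset.Icc 1 (N m),
            (Complex.exp (Complex.I * (((σ m * fd (d+1) n) : ℝ) : ℂ)) - 1)‖ := by
          rw [norm_mul, norm_inv, Complex.norm_natCast]
      _ ≤ ((N m:ℝ))⁻¹ * (2 * (A m:ℝ)
            + (N m : ℝ) * ((d.factorial:ℝ) * σ m ^ (1 - γ*((d:ℝ)+1)))) := by
          apply mul_le_mul_of_nonneg_left _ (by positivity)
          rw [hsum]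
          calc ‖_ + _‖ ≤ ‖_‖ + ‖_‖ := norm_add_le _ _
            _ ≤ 2 * (A m:ℝ) + (N m : ℝ) * ((d.factorial:ℝ) * σ m ^ (1 - γ*((d:ℝ)+1))) :=
                add_le_add hb1 hb2'
      _ = 2*((A m:ℝ)/(N m:ℝ)) + ((N m:ℝ))⁻¹ * (N m : ℝ) * ((d.factorial:ℝ) * σ m ^ (1 - γ*((d:ℝ)+1))) := by
          ring
      _ = g2 m := by
          rw [inv_mul_cancel₀ (ne_of_gt hNpos)]
          simp [hg2]
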